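/- Let p > q ≥ 2 be relatively prime integers with p ≥ 2q−1, and let n > 0. Then the number of words w of length n over the alphabet D_{p,q} that belong to L(p,q) (i.e. that occur as factors of traces (F_{p,q}^t(c)(1))_{t∈ℤ}) is at most q^{n+1}. -/
import Mathlib


/-- The local rule multiplying by `p` in base `pq`: writing `x = x₁q + x₀` with
`x₀ ∈ {0,…,q-1}`, `x₁ ∈ {0,…,p-1}`, we have `g p q x y = x₀p + y₁`. -/
def g (p q x y : ℕ) : ℕ := x % q * p + y / q

/-- The cellular automaton `G_{p,q}` on configurations. -/
def Gca (p q : ℕ) (c : ℤ → ℕ) : ℤ → ℕ := fun i => g p q (c i) (c (i + 1))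

/-- The cellular automaton `F_{p,q} = σ⁻¹ ∘ G_{p,q} ∘ G_{p,q}`, where `σ` is the left
shift `σ(c)(i) = c(i+1)`. Its inverse is `Fca q p`. -/
def Fca (p q : ℕ) (c : ℤ → ℕ) : ℤ → ℕ := fun i => Gca p q (Gca p q c) (i - 1)

/-- Integer iterates of `F_{p,q}`. -/
def Fiter (p q : ℕ) (k : ℤ) (c : ℤ → ℕ) : ℤ → ℕ :=
  if 0 ≤ k then (Fca p q)^[k.toNat] c else (Fca q p)^[(-k).toNat] c

/-- `w ∈ L(p,q)`: the word `w` occurs in a column of a space-time diagram of `F_{p,q}`,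
i.e. there are a configuration `c` over the digits `{0,…,pq-1}` and `t₀ ∈ ℤ` with
`w(j) = F_{p,q}^{t₀+j}(c)(1)` for every position `j` of `w`. -/
def inTraceLang (p q : ℕ) (w : List ℕ) : Prop :=
  ∃ (c : ℤ → ℕ) (t₀ : ℤ), (∀ i, c i < p * q) ∧
    ∀ j : Fin w.length, w.get j = Fiter p q (t₀ + (j : ℕ)) c 1

section aux

variable {p q : ℕ}

lemma g_lt (hp : 0 < p) (hq : 0 < q) (x y : ℕ) (hy : y < p * q) :
    g p q x y < p * q := by
  have h1 : x % q < q := Nat.mod_lt _ hq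
  have h2 : y / q < p := (Nat.div_lt_iff_lt_mul hq).mpr hy
  show x % q * p + y / q < p * q
  calc x % q * p + y / q < x % q * p + p := by exact Nat.add_lt_add_left h2 _
    _ = (x % q + 1) * p := by ring
    _ ≤ q * p := Nat.mul_le_mul_right p h1
    _ = p * q := mul_comm q p

lemma Gca_valid (hp : 0 < p) (hq : 0 < q) {c : ℤ → ℕ} (hc : ∀ i, c i < p * q) :
    ∀ i, Gca p q c i < p * q := fun i => g_lt hp hq _ _ (hc (i + 1))

lemma Fca_valid (hp : 0 < p) (hq : 0 < q) {c : ℤ → ℕ} (hc : ∀ i, c i < p * q) :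
    ∀ i, Fca p q c i < p * q :=
  fun i => g_lt hp hq _ _ (Gca_valid hp hq hc (i - 1 + 1))

lemma GG (hp : 0 < p) (hq : 0 < q) {c : ℤ → ℕ} (hc : ∀ i, c i < p * q) (i : ℤ) :
    Gca q p (Gca p q c) i = c (i + 1) := by
  show (c i % q * p + c (i+1) / q) % p * q + (c (i+1) % q * p + c (i+1+1) / q) / p = c (i+1)
  have h1 : c (i+1) / q < p := (Nat.div_lt_iff_lt_mul hq).mpr (hc _)
  have h2 : c (i+1+1) / q < p := (Nat.div_lt_iff_lt_mul hq).mpr (hc _)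
  rw [add_comm (c i % q * p), Nat.add_mul_mod_self_right, Nat.mod_eq_of_lt h1,
    add_comm (c (i+1) % q * p), Nat.add_mul_div_right _ _ hp, Nat.div_eq_of_lt h2, zero_add]
  exact Nat.div_add_mod' _ _

lemma Gmid (hp : 0 < p) (hq : 0 < q) {c : ℤ → ℕ} (hc : ∀ i, c i < p * q) (j : ℤ) :
    Gca q p (Fca p q c) j = Gca p q c j := by
  have h := GG hp hq (Gca_valid hp hq hc) (j - 1)
  rw [show j - 1 + 1 = j by ring] at h
  show g q p (Gca p q (Gca p q c) (j - 1)) (Gca p q (Gca p q c) (j + 1 - 1)) = _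
  rw [show (j + 1 - 1 : ℤ) = j - 1 + 1 by ring]
  exact h

lemma Finv (hp : 0 < p) (hq : 0 < q) {c : ℤ → ℕ} (hc : ∀ i, c i < p * q) (i : ℤ) :
    Fca q p (Fca p q c) i = c i := by
  show g q p (Gca q p (Fca p q c) (i - 1)) (Gca q p (Fca p q c) (i - 1 + 1)) = c i
  rw [Gmid hp hq hc, Gmid hp hq hc]
  have h := GG hp hq hc (i - 1)
  rw [show i - 1 + 1 = i by ring] at h
  exact h

lemma iter_valid (hp : 0 < p) (hq : 0 < q) {c : ℤ → ℕ} (hc : ∀ i, c i < p * q) :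
    ∀ m i, ((Fca p q)^[m] c) i < p * q := by
  intro m
  induction m with
  | zero => simpa using hc
  | succ k ih =>
    intro i
    rw [Function.iterate_succ_apply']
    exact Fca_valid hp hq ih i

lemma Fiter_valid (hp : 0 < p) (hq : 0 < q) {c : ℤ → ℕ} (hc : ∀ i, c i < p * q) (t : ℤ) :
    ∀ i, Fiter p q t c i < p * q := by
  intro i
  unfold Fiter
  split
  · exact iter_valid hp hq hc _ i
  · have h := iter_valid (p := q) (q := p) hq hp (fun j => mul_comm p q ▸ hc j) (-t).toNat i
    exact mul_comm q p ▸ h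

lemma Fiter_succ_eq (hp : 0 < p) (hq : 0 < q) {c : ℤ → ℕ} (hc : ∀ i, c i < p * q) (t : ℤ) :
    Fiter p q (t + 1) c = Fca p q (Fiter p q t c) := by
  by_cases h : 0 ≤ t
  · unfold Fiter
    rw [if_pos (by omega : (0:ℤ) ≤ t + 1), if_pos h,
      show (t + 1).toNat = t.toNat + 1 by omega, Function.iterate_succ_apply']
  · unfold Fiter
    rw [if_neg h]
    by_cases h1 : 0 ≤ t + 1
    · rw [if_pos h1, show (t + 1).toNat = 0 by omega, show (-t).toNat = 1 by omega]
      simp only [Function.iterate_zero, Function.iterate_one, id]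
      funext i
      exact (Finv (p := q) (q := p) hq hp (fun j => mul_comm p q ▸ hc j) i).symm
    · rw [if_neg h1, show (-t).toNat = (-(t + 1)).toNat + 1 by omega,
        Function.iterate_succ_apply']
      funext i
      have hv : ∀ j, ((Fca q p)^[(-(t + 1)).toNat] c) j < q * p :=
        iter_valid hq hp (fun j => mul_comm p q ▸ hc j) _
      exact (Finv (p := q) (q := p) hq hp hv i).symm

lemma arith {p q k d a0 z : ℕ} (hq2 : 2 ≤ q) (hqp : q < p) (h2q : 2 * q - 1 ≤ p)
    (ha0 : a0 < q) (hz : z < p) (hdq : d < q) (hmod : k * q % p = d)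
    (hk : (a0 * p + z) / q = k) : a0 = k * q / p := by
  have hp : 0 < p := by omega
  have hq : 0 < q := by omega
  have h2q' : 2 * q ≤ p + 1 := by omega
  have h1 : q * ((a0 * p + z) / q) + (a0 * p + z) % q = a0 * p + z := Nat.div_add_mod _ _
  rw [hk] at h1
  have hr : (a0 * p + z) % q < q := Nat.mod_lt _ hq
  set r := (a0 * p + z) % q with hrdef
  have h2 : p * (k * q / p) + k * q % p = k * q := Nat.div_add_mod _ _
  rw [hmod] at h2
  set m := k * q / p with hm
  have hqk : q * k = k * q := mul_comm _ _
  have f1 : (m + 1) * p = p * m + p := by ring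
  have f2 : (a0 + 1) * p = a0 * p + p := by ring
  have f3 : m * p = p * m := by ring
  have e1 : a0 * p < (m + 1) * p := by linarith
  have e2 : m * p < (a0 + 1) * p := by linarith
  have g1 : a0 < m + 1 := lt_of_mul_lt_mul_right e1 (Nat.zero_le p)
  have g2 : m < a0 + 1 := lt_of_mul_lt_mul_right e2 (Nat.zero_le p)
  omega

lemma trace_step (hq2 : 2 ≤ q) (hqp : q < p) (h2q : 2 * q - 1 ≤ p)
    {c : ℤ → ℕ} (hc : ∀ i, c i < p * q) {k d : ℕ} (hkp : k < p) (hdq : d < q)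
    (hmod : k * q % p = d) (hb : (Fca p q c 1) % p = k) :
    c 1 % q = k * q / p := by
  have hp : 0 < p := by omega
  have hq : 0 < q := by omega
  have hBval : g p q (c 1) (c 2) < p * q := g_lt hp hq _ _ (hc 2)
  have hBq : g p q (c 1) (c 2) / q < p := (Nat.div_lt_iff_lt_mul hq).mpr hBval
  have h1 : Fca p q c 1 = g p q (c 0) (c 1) % q * p + g p q (c 1) (c 2) / q := by
    show g p q (g p q (c (1-1)) (c (1-1+1))) (g p q (c (1-1+1)) (c (1-1+1+1))) = _
    norm_num
    rfl
  have hbp : Fca p q c 1 % p = g p q (c 1) (c 2) / q := by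
    rw [h1, add_comm (g p q (c 0) (c 1) % q * p), Nat.add_mul_mod_self_right,
      Nat.mod_eq_of_lt hBq]
  have hk' : (c 1 % q * p + c 2 / q) / q = k := hbp.symm.trans hb
  exact arith hq2 hqp h2q (Nat.mod_lt _ hq) ((Nat.div_lt_iff_lt_mul hq).mpr (hc 2))
    hdq hmod hk'

lemma crt_eq {p q x y : ℕ} (hpq : Nat.Coprime p q) (hx : x < p * q) (hy : y < p * q)
    (h1 : x % p = y % p) (h2 : x % q = y % q) : x = y := by
  have h3 : x ≡ y [MOD p * q] := (Nat.modEq_and_modEq_iff_modEq_mul hpq).mp ⟨h1, h2⟩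
  rwa [Nat.ModEq, Nat.mod_eq_of_lt hx, Nat.mod_eq_of_lt hy] at h3

lemma word_facts (hq2 : 2 ≤ q) (hqp : q < p) (h2q : 2 * q - 1 ≤ p)
    (kd : ℕ → ℕ) (hkd : ∀ d < q, kd d < p ∧ kd d * q % p = d)
    {w : List ℕ} (hmem : ∀ x ∈ w, x < p * q ∧ ∃ d < q, x % p = kd d)
    (htr : inTraceLang p q w) (j : ℕ) (hj : j + 1 < w.length) :
    w[j] % q = w[j + 1] % p * q / p := by
  have hp : 0 < p := by omega
  have hq : 0 < q := by omega
  obtain ⟨c, t₀, hc, hwt⟩ := htr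
  have h0 : w[j] = Fiter p q (t₀ + j) c 1 := by
    have := hwt ⟨j, by omega⟩
    simpa [List.get_eq_getElem] using this
  have h1 : w[j + 1] = Fiter p q (t₀ + j + 1) c 1 := by
    have h := hwt ⟨j + 1, hj⟩
    rw [List.get_eq_getElem] at h
    rw [h]
    have : (t₀ + ((j + 1 : ℕ) : ℤ)) = t₀ + j + 1 := by push_cast; ring
    rw [this]
  obtain ⟨hlt, d, hdq, hxd⟩ := hmem _ (List.getElem_mem hj)
  have hstep : Fiter p q (t₀ + j + 1) c = Fca p q (Fiter p q (t₀ + j) c) :=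
    Fiter_succ_eq hp hq hc _
  have hb : (Fca p q (Fiter p q (t₀ + j) c) 1) % p = kd d := by
    rw [← hstep, ← h1]; exact hxd
  have hcv : ∀ i, Fiter p q (t₀ + j) c i < p * q := Fiter_valid hp hq hc _
  have key := trace_step hq2 hqp h2q hcv (hkd d hdq).1 hdq (hkd d hdq).2 hb
  rw [h0, hxd]
  exact key

/-- Encoding of a word by its sequence of `D`-indices plus last letter mod `q`. -/
def fenc (p q n : ℕ) (hq : 0 < q) : List ℕ → (Fin n → Fin q) × Fin q := fun w =>
  (fun i => ⟨min (w.getD i 0 % p * q % p) (q - 1), by omega⟩,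
   ⟨min (w.getD (n - 1) 0 % q) (q - 1), by omega⟩)

end aux

theorem stmt8 (p q : ℕ) (hq : 2 ≤ q) (hqp : q < p) (hpq : Nat.Coprime p q)
    (h2q : 2 * q - 1 ≤ p)
    (kd : ℕ → ℕ) (hkd : ∀ d < q, kd d < p ∧ kd d * q % p = d)
    (n : ℕ) (hn : 0 < n) :
    {w : List ℕ | w.length = n ∧ (∀ x ∈ w, x < p * q ∧ ∃ d < q, x % p = kd d) ∧
        inTraceLang p q w}.Finite ∧
    {w : List ℕ | w.length = n ∧ (∀ x ∈ w, x < p * q ∧ ∃ d < q, x % p = kd d) ∧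
        inTraceLang p q w}.ncard ≤ q ^ (n + 1) := by
  have hp0 : 0 < p := by omega
  have hq0 : 0 < q := by omega
  set S := {w : List ℕ | w.length = n ∧ (∀ x ∈ w, x < p * q ∧ ∃ d < q, x % p = kd d) ∧
      inTraceLang p q w} with hSdef
  set f := fenc p q n hq0 with hfdef
  have hinj : Set.InjOn f S := by
    intro w hw w' hw' hfeq
    obtain ⟨hl, hm, ht⟩ := hw
    obtain ⟨hl', hm', ht'⟩ := hw'
    have hidx : ∀ (u : List ℕ), u.length = n →
        (∀ x ∈ u, x < p * q ∧ ∃ d < q, x % p = kd d) →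
        ∀ i, i < n → u.getD i 0 % p * q % p < q ∧
          u.getD i 0 % p = kd (u.getD i 0 % p * q % p) := by
      intro u hlu hmu i hi
      have hilen : i < u.length := by omega
      have hgd : u.getD i 0 = u[i] := List.getD_eq_getElem u 0 hilen
      obtain ⟨-, d, hd, hxd⟩ := hmu u[i] (List.getElem_mem hilen)
      rw [hgd, hxd, (hkd d hd).2]
      exact ⟨hd, rfl⟩
    have hDeq : ∀ i, i < n →
        w.getD i 0 % p * q % p = w'.getD i 0 % p * q % p := by
      intro i hi
      have h1 := congrArg Fin.val (congrFun (congrArg Prod.fst hfeq) ⟨i, hi⟩)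
      simp only [hfdef, fenc] at h1
      have h2 := (hidx w hl hm i hi).1
      have h3 := (hidx w' hl' hm' i hi).1
      omega
    apply List.ext_getElem (by omega)
    intro j hj hj'
    have hjn : j < n := by omega
    have hgw : w.getD j 0 = w[j] := List.getD_eq_getElem w 0 hj
    have hgw' : w'.getD j 0 = w'[j] := List.getD_eq_getElem w' 0 hj'
    have hmp : w[j] % p = w'[j] % p := by
      have hD := hDeq j hjn
      have a1 := (hidx w hl hm j hjn).2
      have a2 := (hidx w' hl' hm' j hjn).2
      rw [← hgw, ← hgw', a1, a2, hD]
    have hlt1 : w[j] < p * q := (hm _ (List.getElem_mem hj)).1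
    have hlt2 : w'[j] < p * q := (hm' _ (List.getElem_mem hj')).1
    have hmq : w[j] % q = w'[j] % q := by
      rcases Nat.lt_or_ge (j + 1) n with hlt | hge
      · have k1 := word_facts hq hqp h2q kd hkd hm ht j (by omega)
        have k2 := word_facts hq hqp h2q kd hkd hm' ht' j (by omega)
        have b1 := (hidx w hl hm (j + 1) hlt).2
        have b2 := (hidx w' hl' hm' (j + 1) hlt).2
        have hD := hDeq (j + 1) hlt
        have hg1 : w.getD (j + 1) 0 = w[j + 1] := List.getD_eq_getElem w 0 (by omega)
        have hg2 : w'.getD (j + 1) 0 = w'[j + 1] := List.getD_eq_getElem w' 0 (by omega)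
        rw [k1, k2, ← hg1, ← hg2, b1, b2, hD]
      · have hjeq : j = n - 1 := by omega
        have h1 := congrArg Fin.val (congrArg Prod.snd hfeq)
        simp only [hfdef, fenc] at h1
        rw [← hjeq] at h1
        rw [hgw, hgw'] at h1
        have m1 : w[j] % q < q := Nat.mod_lt _ hq0
        have m2 : w'[j] % q < q := Nat.mod_lt _ hq0
        omega
    exact crt_eq hpq hlt1 hlt2 hmp hmq
  have hfin : S.Finite := Set.Finite.of_finite_image (Set.toFinite _) hinj
  refine ⟨hfin, ?_⟩
  have himg : (f '' S).ncard = S.ncard := Set.ncard_image_of_injOn hinj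
  have hle : (f '' S).ncard ≤ Nat.card ((Fin n → Fin q) × Fin q) := by
    rw [← Set.ncard_univ]
    exact Set.ncard_le_ncard (Set.subset_univ _) (Set.toFinite _)
  have hcard : Nat.card ((Fin n → Fin q) × Fin q) = q ^ (n + 1) := by
    simp [Nat.card_eq_fintype_card, pow_succ]
  calc S.ncard = (f '' S).ncard := himg.symm
    _ ≤ Nat.card ((Fin n → Fin q) × Fin q) := hle
    _ = q ^ (n + 1) := hcard
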